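/- arXiv:1302.3115 — 3 statements merged into one kernel-verified Lean document; each statement's English description precedes it below -/
import Mathlib

section
/- For every n ≥ 0, ∫_0^1 Q_n(u; 0, 1) du = 2^n · B_n(1/2), where Q_n(u; 0, 1) = Σ_{k=1}^{n+1} M_{n+1,k} u^{n+1−k} (u−1)^{k−1} and B_n is the n-th Bernoulli polynomial. -/
open scoped BigOperators
open MeasureTheory

/-- MacMahon numbers `M n k`: `M n 1 = 1`, `M n k = 0` outside `1 ≤ k ≤ n`, and
`M n k = (2k−1) M (n−1) k + (2n−2k+1) M (n−1) (k−1)`. -/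
def macmahon : ℕ → ℕ → ℕ
  | 0, _ => 0
  | 1, 1 => 1
  | 1, _ => 0
  | n + 2, 0 => 0
  | n + 2, k + 1 =>
      (2 * k + 1) * macmahon (n + 1) (k + 1) +
        (2 * (n + 2) - 2 * (k + 1) + 1) * macmahon (n + 1) k

/-- Derivative polynomial `Q_n(u;a,b) = Σ_{k=1}^{n+1} M_{n+1,k} (u-a)^(n+1-k) (u-b)^(k-1)`. -/
noncomputable def Q (n : ℕ) (a b u : ℝ) : ℝ :=
  ∑ k ∈ Finset.Icc 1 (n + 1), (macmahon (n + 1) k : ℝ) * (u - a) ^ (n + 1 - k) * (u - b) ^ (k - 1)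

/-- The `n`-th Bernoulli polynomial evaluated at a real `x`
(convention `t e^{xt}/(e^t - 1) = Σ B_n(x) t^n / n!`). -/
noncomputable def bernPoly (n : ℕ) (x : ℝ) : ℝ :=
  ((Polynomial.bernoulli n).map (algebraMap ℚ ℝ)).eval x

namespace IntegralQAux

open Polynomial Finset

/-- `Q`-type derivative polynomials. -/
noncomputable def qpol : ℕ → Polynomial ℝ
  | 0 => 1
  | n + 1 => 2 * X * (X - 1) * (qpol n).derivative + (2 * X - 1) * qpol n

/-- `Ψ`-type derivative polynomials. -/
noncomputable def ppol : ℕ → Polynomial ℝ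
  | 0 => 1
  | n + 1 => 2 * X * (X - 1) * (ppol n).derivative + (2 * X + 1) * ppol n

lemma keyE (n : ℕ) : (1 - X) * ppol n + X * qpol n = 1 := by
  induction n with
  | zero => simp [ppol, qpol]
  | succ n ih =>
    have hd := congrArg derivative ih
    simp only [derivative_add, derivative_mul, derivative_one, derivative_X,
      derivative_sub, one_mul, mul_one, zero_mul, mul_zero, zero_sub, add_zero,
      zero_add] at hd
    rw [ppol, qpol]
    linear_combination (2 * X * (X - 1)) * hd + ih

lemma keyD (n : ℕ) :
    ppol (n + 1) - qpol (n + 1)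
      = derivative (2 * X * (X - 1) * (ppol n - qpol n)) + (ppol n - qpol n) + 2 := by
  have h := keyE n
  rw [ppol, qpol]
  simp only [derivative_mul, derivative_sub, derivative_X, derivative_one,
    derivative_ofNat, zero_mul, mul_one, one_mul, mul_zero, zero_add, add_zero, sub_zero]
  linear_combination 2 * h

lemma integral_derivative (p : Polynomial ℝ) :
    ∫ x in (0:ℝ)..1, (derivative p).eval x = p.eval 1 - p.eval 0 :=
  intervalIntegral.integral_eq_sub_of_hasDerivAt
    (fun x _ => p.hasDerivAt x)
    ((derivative p).continuous.intervalIntegrable _ _)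

lemma intD : ∀ n : ℕ, (∫ x in (0:ℝ)..1, (ppol n - qpol n).eval x) = 2 * n := by
  intro n
  induction n with
  | zero => simp [ppol, qpol]
  | succ n ih =>
    have h := keyD n
    have h2 : (fun x : ℝ => (ppol (n+1) - qpol (n+1)).eval x)
        = fun x : ℝ => (derivative (2 * X * (X - 1) * (ppol n - qpol n))).eval x
            + ((ppol n - qpol n).eval x + (2:ℝ)) := by
      funext x; rw [h]; simp; ring
    rw [h2]
    rw [intervalIntegral.integral_add (g := fun x : ℝ => (ppol n - qpol n).eval x + (2:ℝ))
      ((derivative _).continuous.intervalIntegrable _ _)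
      (((ppol n - qpol n).continuous.add continuous_const).intervalIntegrable _ _)]
    rw [intervalIntegral.integral_add ((ppol n - qpol n).continuous.intervalIntegrable _ _)
      (continuous_const.intervalIntegrable _ _)]
    rw [integral_derivative, ih]
    simp
    ring

/-- binomial coefficients linking `ppol` and `qpol`. -/
def cf (n i : ℕ) : ℕ := n.choose i * 2 ^ (n - i)

lemma cf_succ_succ (n i : ℕ) (h : i ≤ n) : cf (n + 1) (i + 1) = cf n i + 2 * cf n (i + 1) := by
  unfold cf
  rcases eq_or_lt_of_le h with rfl | h
  · simp [Nat.choose_succ_self]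
  · have h1 : n - i = n - (i + 1) + 1 := by omega
    have h2 : n + 1 - (i + 1) = n - i := by omega
    rw [Nat.choose_succ_succ, h2, h1, pow_succ]
    ring

lemma cf_succ_zero (n : ℕ) : cf (n + 1) 0 = 2 * cf n 0 := by
  unfold cf; simp [pow_succ]; ring

lemma cf_top (n : ℕ) : cf n (n + 1) = 0 := by
  unfold cf; simp [Nat.choose_eq_zero_of_lt]

lemma key_binom (n : ℕ) :
    ppol n = ∑ i ∈ range (n + 1), (cf n i : Polynomial ℝ) * qpol i := by
  induction n with
  | zero => simp [ppol, qpol, cf]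
  | succ n ih =>
    rw [ppol, ih, derivative_sum, Finset.mul_sum, Finset.mul_sum, ← Finset.sum_add_distrib]
    have step : ∀ i ∈ range (n + 1),
        2 * X * (X - 1) * derivative ((cf n i : Polynomial ℝ) * qpol i)
          + (2 * X + 1) * ((cf n i : Polynomial ℝ) * qpol i)
        = (cf n i : Polynomial ℝ) * qpol (i + 1) + 2 * ((cf n i : Polynomial ℝ) * qpol i) := by
      intro i _
      rw [qpol]
      simp only [derivative_mul, derivative_natCast, zero_mul, zero_add]
      ring
    rw [Finset.sum_congr rfl step, Finset.sum_add_distrib]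
    rw [Finset.sum_range_succ' (fun i => 2 * ((cf n i : Polynomial ℝ) * qpol i)) n]
    rw [Finset.sum_range_succ' (fun i => (cf (n+1) i : Polynomial ℝ) * qpol i) (n+1)]
    have ext : ∑ i ∈ range n, 2 * ((cf n (i+1) : Polynomial ℝ) * qpol (i+1))
        = ∑ i ∈ range (n+1), 2 * ((cf n (i+1) : Polynomial ℝ) * qpol (i+1)) := by
      rw [Finset.sum_range_succ, cf_top]
      simp
    rw [ext, ← add_assoc, ← Finset.sum_add_distrib]
    have hcongr : ∀ i ∈ range (n+1),
        (cf n i : Polynomial ℝ) * qpol (i+1) + 2 * ((cf n (i+1) : Polynomial ℝ) * qpol (i+1))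
        = (cf (n+1) (i+1) : Polynomial ℝ) * qpol (i+1) := by
      intro i hi
      rw [cf_succ_succ n i (Nat.lt_succ_iff.mp (mem_range.mp hi))]
      push_cast
      ring
    rw [Finset.sum_congr rfl hcongr, cf_succ_zero]
    push_cast
    ring

/-- the sequence of integrals of `qpol`. -/
noncomputable def II (n : ℕ) : ℝ := ∫ x in (0:ℝ)..1, (qpol n).eval x

lemma int_ppol (n : ℕ) :
    (∫ x in (0:ℝ)..1, (ppol n).eval x) = ∑ i ∈ range (n + 1), (cf n i : ℝ) * II i := by
  have h : (fun x : ℝ => (ppol n).eval x)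
      = fun x : ℝ => ∑ i ∈ range (n + 1), (cf n i : ℝ) * (qpol i).eval x := by
    funext x
    rw [key_binom n]
    simp [eval_finset_sum]
  rw [h, intervalIntegral.integral_finset_sum]
  · refine Finset.sum_congr rfl fun i _ => ?_
    rw [intervalIntegral.integral_const_mul]
    rfl
  · intro i _
    exact (continuous_const.mul (qpol i).continuous).intervalIntegrable _ _

lemma sum_id_I (n : ℕ) :
    ∑ i ∈ range (n + 1), ((n+1).choose i : ℝ) * 2 ^ (n - i) * II i = (n : ℝ) + 1 := by
  have h1 : (∫ x in (0:ℝ)..1, (ppol (n+1)).eval x) = II (n+1) + 2 * ((n:ℝ) + 1) := by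
    have hsub : (fun x : ℝ => (ppol (n+1) - qpol (n+1)).eval x)
        = fun x : ℝ => (ppol (n+1)).eval x - (qpol (n+1)).eval x := by
      funext x; simp
    have h2 := intD (n + 1)
    rw [hsub] at h2
    rw [intervalIntegral.integral_sub ((ppol (n+1)).continuous.intervalIntegrable _ _)
      ((qpol (n+1)).continuous.intervalIntegrable _ _)] at h2
    push_cast at h2
    rw [II]
    linarith
  have h3 := int_ppol (n + 1)
  rw [Finset.sum_range_succ] at h3
  have hcf : (cf (n+1) (n+1) : ℝ) = 1 := by unfold cf; simp
  rw [hcf, one_mul, h1] at h3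
  have h4 : ∑ i ∈ range (n + 1), (cf (n+1) i : ℝ) * II i = 2 * ((n:ℝ) + 1) := by linarith
  have h5 : ∀ i ∈ range (n + 1), (cf (n+1) i : ℝ) * II i
      = 2 * (((n+1).choose i : ℝ) * 2 ^ (n - i) * II i) := by
    intro i hi
    have hin : i ≤ n := Nat.lt_succ_iff.mp (mem_range.mp hi)
    have : cf (n+1) i = 2 * ((n+1).choose i * 2 ^ (n - i)) := by
      unfold cf
      have : n + 1 - i = (n - i) + 1 := by omega
      rw [this, pow_succ]
      ring
    rw [this]
    push_cast
    ring
  rw [Finset.sum_congr rfl h5, ← Finset.mul_sum] at h4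
  linarith

/-- the Bernoulli side sequence. -/
noncomputable def bb (n : ℕ) : ℝ := 2 ^ n * bernPoly n (1 / 2)

lemma bern_half (n : ℕ) :
    ∑ i ∈ range (n + 1), ((n+1).choose i : ℝ) * bernPoly i (1/2) = ((n:ℝ) + 1) * (1/2) ^ n := by
  have h := Polynomial.sum_bernoulli n
  have h2 := congrArg (fun p : Polynomial ℚ => ((p.map (algebraMap ℚ ℝ)).eval ((1:ℝ)/2))) h
  simp only [Polynomial.map_sum, Polynomial.eval_finset_sum, Polynomial.smul_eq_C_mul,
    Polynomial.map_mul, Polynomial.map_C, Polynomial.eval_mul, Polynomial.eval_C,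
    Polynomial.map_monomial, Polynomial.eval_monomial, map_natCast, map_add, map_one] at h2
  simp only [Polynomial.map_natCast, Polynomial.eval_natCast, Polynomial.map_add,
    Polynomial.eval_add, Polynomial.map_monomial, Polynomial.eval_monomial, map_one,
    map_natCast] at h2
  unfold bernPoly
  rw [h2]
  push_cast
  ring

lemma sum_id_b (n : ℕ) :
    ∑ i ∈ range (n + 1), ((n+1).choose i : ℝ) * 2 ^ (n - i) * bb i = (n : ℝ) + 1 := by
  have h := bern_half n
  have h5 : ∀ i ∈ range (n + 1), ((n+1).choose i : ℝ) * 2 ^ (n - i) * bb i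
      = 2 ^ n * (((n+1).choose i : ℝ) * bernPoly i (1/2)) := by
    intro i hi
    have hin : i ≤ n := Nat.lt_succ_iff.mp (mem_range.mp hi)
    have hp : (2:ℝ) ^ (n - i) * 2 ^ i = 2 ^ n := by
      rw [← pow_add]
      congr 1
      omega
    rw [bb]
    calc ((n+1).choose i : ℝ) * 2 ^ (n - i) * (2 ^ i * bernPoly i (1/2))
        = ((2:ℝ) ^ (n-i) * 2 ^ i) * (((n+1).choose i : ℝ) * bernPoly i (1/2)) := by ring
      _ = 2 ^ n * (((n+1).choose i : ℝ) * bernPoly i (1/2)) := by rw [hp]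
  rw [Finset.sum_congr rfl h5, ← Finset.mul_sum, h]
  rw [show ((1:ℝ)/2) ^ n = ((2:ℝ)^n)⁻¹ by rw [one_div, inv_pow]]
  field_simp

lemma II_eq_bb (n : ℕ) : II n = bb n := by
  induction n using Nat.strong_induction_on with
  | _ n ih =>
    have h1 := sum_id_I n
    have h2 := sum_id_b n
    rw [Finset.sum_range_succ] at h1 h2
    have hsum : ∑ i ∈ range n, ((n+1).choose i : ℝ) * 2 ^ (n - i) * II i
        = ∑ i ∈ range n, ((n+1).choose i : ℝ) * 2 ^ (n - i) * bb i :=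
      Finset.sum_congr rfl fun i hi => by rw [ih i (mem_range.mp hi)]
    have hch : ((n+1).choose n : ℝ) = (n : ℝ) + 1 := by
      rw [Nat.choose_succ_self_right]
      push_cast
      ring
    have hnn : n - n = 0 := Nat.sub_self n
    rw [hnn, pow_zero, mul_one, hch] at h1 h2
    have : ((n:ℝ) + 1) * II n = ((n:ℝ) + 1) * bb n := by linarith
    have hne : ((n:ℝ) + 1) ≠ 0 := by positivity
    exact mul_left_cancel₀ hne this

lemma macmahon_zero_right (m : ℕ) : macmahon m 0 = 0 := by
  match m with
  | 0 => rfl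
  | 1 => rfl
  | n + 2 => rfl

lemma macmahon_gt (m k : ℕ) (h : m < k) : macmahon m k = 0 := by
  induction m generalizing k with
  | zero => rfl
  | succ m ih =>
    match m, k, h with
    | 0, k + 2, _ => rfl
    | m + 1, k + 1, h =>
      show macmahon (m + 2) (k + 1) = 0
      have e : macmahon (m + 2) (k + 1) =
          (2 * k + 1) * macmahon (m + 1) (k + 1) +
            (2 * (m + 2) - 2 * (k + 1) + 1) * macmahon (m + 1) k := rfl
      rw [e, ih (k + 1) (by omega), ih k (by omega)]
      simp

lemma macmahon_succ (n j : ℕ) (h : j ≤ n + 1) :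
    macmahon (n + 2) (j + 1)
      = (2 * j + 1) * macmahon (n + 1) (j + 1) + (2 * (n + 1 - j) + 1) * macmahon (n + 1) j := by
  have e : macmahon (n + 2) (j + 1) =
      (2 * j + 1) * macmahon (n + 1) (j + 1) +
        (2 * (n + 2) - 2 * (j + 1) + 1) * macmahon (n + 1) j := rfl
  rw [e]
  congr 2
  omega

lemma term_step (a b : ℕ) :
    2 * X * (X - 1) * derivative ((X : Polynomial ℝ) ^ a * (X - 1) ^ b)
        + (2 * X - 1) * ((X : Polynomial ℝ) ^ a * (X - 1) ^ b)
      = ((2 * b + 1 : ℕ) : Polynomial ℝ) * ((X : Polynomial ℝ) ^ (a + 1) * (X - 1) ^ b)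
        + ((2 * a + 1 : ℕ) : Polynomial ℝ) * ((X : Polynomial ℝ) ^ a * (X - 1) ^ (b + 1)) := by
  have hd : derivative ((X : Polynomial ℝ) ^ a * (X - 1) ^ b)
      = C (a : ℝ) * X ^ (a - 1) * (X - 1) ^ b + (X : Polynomial ℝ) ^ a * (C (b : ℝ) * (X - 1) ^ (b - 1)) := by
    rw [derivative_mul, derivative_X_pow, derivative_pow]
    simp
  rw [hd]
  cases a with
  | zero =>
    cases b with
    | zero => simp; ring
    | succ b =>
      simp only [Nat.cast_zero, map_zero, zero_mul, pow_zero, Nat.succ_sub_one, one_mul,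
        zero_add, C_eq_natCast]
      push_cast
      ring
  | succ a =>
    cases b with
    | zero =>
      simp only [Nat.cast_zero, map_zero, zero_mul, mul_zero, pow_zero, Nat.succ_sub_one,
        add_zero, mul_one, C_eq_natCast]
      push_cast
      ring
    | succ b =>
      simp only [Nat.succ_sub_one, C_eq_natCast]
      push_cast
      ring

lemma qpol_eq_sum (n : ℕ) :
    qpol n = ∑ j ∈ range (n + 1),
      Polynomial.C (macmahon (n + 1) (j + 1) : ℝ) * (X ^ (n - j) * (X - 1) ^ j) := by
  induction n with
  | zero =>
    have h1 : macmahon 1 1 = 1 := rfl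
    simp [qpol, h1]
  | succ n ih =>
    rw [qpol, ih, derivative_sum, Finset.mul_sum, Finset.mul_sum, ← Finset.sum_add_distrib]
    have step : ∀ j ∈ range (n + 1),
        2 * X * (X - 1) * derivative (C (macmahon (n+1) (j+1) : ℝ) * (X ^ (n - j) * (X - 1) ^ j))
          + (2 * X - 1) * (C (macmahon (n+1) (j+1) : ℝ) * (X ^ (n - j) * (X - 1) ^ j))
        = C (((2 * j + 1) * macmahon (n+1) (j+1) : ℕ) : ℝ) * (X ^ (n + 1 - j) * (X - 1) ^ j)
          + C (((2 * (n - j) + 1) * macmahon (n+1) (j+1) : ℕ) : ℝ)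
              * (X ^ (n - j) * (X - 1) ^ (j + 1)) := by
      intro j hj
      have hjn : j ≤ n := Nat.lt_succ_iff.mp (mem_range.mp hj)
      have he : n - j + 1 = n + 1 - j := by omega
      have ts := term_step (n - j) j
      rw [he] at ts
      rw [derivative_mul, derivative_C, zero_mul, zero_add]
      simp only [Nat.cast_mul, map_mul, C_eq_natCast]
      linear_combination ((macmahon (n+1) (j+1) : ℕ) : Polynomial ℝ) * ts
    rw [Finset.sum_congr rfl step, Finset.sum_add_distrib]
    have expand : ∀ j ∈ range (n + 2),
        C (macmahon (n + 2) (j + 1) : ℝ) * (X ^ (n + 1 - j) * (X - 1) ^ j)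
        = C (((2 * j + 1) * macmahon (n+1) (j+1) : ℕ) : ℝ) * (X ^ (n + 1 - j) * (X - 1) ^ j)
          + C (((2 * (n + 1 - j) + 1) * macmahon (n+1) j : ℕ) : ℝ)
              * (X ^ (n + 1 - j) * (X - 1) ^ j) := by
      intro j hj
      rw [macmahon_succ n j (Nat.lt_succ_iff.mp (mem_range.mp hj))]
      simp only [Nat.cast_mul, Nat.cast_add, map_mul, map_add, C_eq_natCast]
      ring
    rw [Finset.sum_congr rfl expand, Finset.sum_add_distrib]
    congr 1
    · -- first sums : drop the top (j = n+1) term on the RHS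
      rw [Finset.sum_range_succ
        (fun j => C (((2 * j + 1) * macmahon (n+1) (j+1) : ℕ) : ℝ)
          * (X ^ (n + 1 - j) * (X - 1) ^ j)) (n + 1)]
      rw [macmahon_gt (n+1) (n+2) (by omega)]
      simp
    · -- second sums : peel the bottom (j = 0) term on the RHS
      rw [Finset.sum_range_succ'
        (fun j => C (((2 * (n + 1 - j) + 1) * macmahon (n+1) j : ℕ) : ℝ)
          * (X ^ (n + 1 - j) * (X - 1) ^ j)) (n + 1)]
      rw [macmahon_zero_right (n+1)]
      simp only [Nat.succ_sub_succ_eq_sub, Nat.mul_zero, mul_zero, Nat.cast_zero, map_zero,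
        zero_mul, add_zero]

lemma Q_eq (n : ℕ) (u : ℝ) : Q n 0 1 u = (qpol n).eval u := by
  rw [Q, qpol_eq_sum, Polynomial.eval_finset_sum]
  rw [show Finset.Icc 1 (n + 1) = Finset.Ico 1 (n + 2) from (Finset.Ico_add_one_right_eq_Icc 1 (n+1)).symm]
  rw [Finset.sum_Ico_eq_sum_range]
  rw [show n + 2 - 1 = n + 1 from rfl]
  refine Finset.sum_congr rfl fun j hj => ?_
  rw [show 1 + j = j + 1 by omega]
  simp only [Nat.succ_sub_succ_eq_sub, Nat.add_sub_cancel, Nat.sub_zero, sub_zero, eval_mul,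
    eval_C, eval_pow, eval_X, eval_sub, eval_one]
  ring

end IntegralQAux

theorem integral_Q_zero_one (n : ℕ) :
    ∫ u in (0:ℝ)..1, Q n 0 1 u = 2 ^ n * bernPoly n (1 / 2) := by
  have h : (fun u : ℝ => Q n 0 1 u) = fun u : ℝ => (IntegralQAux.qpol n).eval u :=
    funext (IntegralQAux.Q_eq n)
  calc ∫ u in (0:ℝ)..1, Q n 0 1 u = ∫ x in (0:ℝ)..1, (IntegralQAux.qpol n).eval x := by rw [h]
    _ = IntegralQAux.bb n := IntegralQAux.II_eq_bb n
    _ = 2 ^ n * bernPoly n (1 / 2) := rfl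
end

section
/- For every n ≥ 0 and real a < b, ∫_a^b Q_n(u; a, b) du = 2^n · B_n(1/2) · (b−a)^{n+1}, where Q_n(u; a, b) = Σ_{k=1}^{n+1} M_{n+1,k} (u−a)^{n+1−k} (u−b)^{k−1}. -/
open scoped BigOperators
open MeasureTheory

section Aux
open Polynomial Finset

noncomputable def PP : ℕ → ℝ[X]
  | 0 => 1
  | n + 1 => 2 * (X ^ 2 - X) * derivative (PP n) + (2 * X - 1) * PP n

noncomputable def SS (m : ℕ) : ℝ[X] :=
  ∑ j ∈ Finset.range m, Polynomial.C ((m.choose j : ℝ) * 2 ^ (m - j)) * PP j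

lemma SS_deriv (m : ℕ) :
    derivative (SS m) = ∑ j ∈ Finset.range m,
      Polynomial.C ((m.choose j : ℝ) * 2 ^ (m - j)) * derivative (PP j) := by
  simp only [SS, derivative_sum, derivative_C_mul]

lemma SS_succ (m : ℕ) :
    SS (m + 1) = 2 * SS m + 2 * PP m + 2 * (X ^ 2 - X) * derivative (SS m)
      + (2 * X - 1) * SS m := by
  have h1 : SS (m + 1)
      = (∑ j ∈ Finset.range m, Polynomial.C (((m + 1).choose (j + 1) : ℝ) * 2 ^ (m - j)) * PP (j + 1))
        + Polynomial.C ((1 : ℝ) * 2 ^ (m + 1)) * PP 0 := by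
    rw [SS, Finset.sum_range_succ' (fun j => Polynomial.C (((m + 1).choose j : ℝ) * 2 ^ (m + 1 - j)) * PP j) m]
    simp
  have h2 : ∀ j ∈ Finset.range m,
      Polynomial.C (((m + 1).choose (j + 1) : ℝ) * 2 ^ (m - j)) * PP (j + 1)
      = Polynomial.C ((m.choose j : ℝ) * 2 ^ (m - j)) * PP (j + 1)
        + Polynomial.C ((m.choose (j + 1) : ℝ) * 2 ^ (m - j)) * PP (j + 1) := by
    intro j hj
    rw [Nat.choose_succ_succ, Nat.cast_add, add_mul, map_add, add_mul]
  rw [h1, Finset.sum_congr rfl h2, Finset.sum_add_distrib]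
  have h3 : (∑ j ∈ Finset.range m, Polynomial.C ((m.choose j : ℝ) * 2 ^ (m - j)) * PP (j + 1))
      = 2 * (X ^ 2 - X) * derivative (SS m) + (2 * X - 1) * SS m := by
    rw [SS_deriv, SS, Finset.mul_sum, Finset.mul_sum, ← Finset.sum_add_distrib]
    refine Finset.sum_congr rfl fun j hj => ?_
    show Polynomial.C ((m.choose j : ℝ) * 2 ^ (m - j)) * (2 * (X ^ 2 - X) * derivative (PP j) + (2 * X - 1) * PP j) = _
    ring
  have h4 : (∑ j ∈ Finset.range m, Polynomial.C ((m.choose (j + 1) : ℝ) * 2 ^ (m - j)) * PP (j + 1))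
        + Polynomial.C ((1 : ℝ) * 2 ^ (m + 1)) * PP 0
      = 2 * SS m + 2 * PP m := by
    have e1 : ∀ j ∈ Finset.range m,
        Polynomial.C ((m.choose (j + 1) : ℝ) * 2 ^ (m - j)) * PP (j + 1)
        = Polynomial.C ((m.choose (j + 1) : ℝ) * 2 ^ (m - (j + 1))) * PP (j + 1) * 2 := by
      intro j hj
      rw [Finset.mem_range] at hj
      have h : m - j = (m - (j + 1)) + 1 := by omega
      rw [h, pow_succ, ← mul_assoc, map_mul]
      simp only [map_ofNat]
      ring
    have e0 : Polynomial.C ((1 : ℝ) * 2 ^ (m + 1)) * PP 0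
        = Polynomial.C ((m.choose 0 : ℝ) * 2 ^ (m - 0)) * PP 0 * 2 := by
      simp only [pow_succ, Nat.choose_zero_right, Nat.cast_one, one_mul, Nat.sub_zero, map_mul,
        map_ofNat]
      ring
    rw [Finset.sum_congr rfl e1, e0,
      ← Finset.sum_range_succ' (fun j => Polynomial.C ((m.choose j : ℝ) * 2 ^ (m - j)) * PP j * 2) m,
      Finset.sum_range_succ]
    simp only [Nat.choose_self, Nat.cast_one, Nat.sub_self, pow_zero, one_mul, mul_one, map_one]
    rw [← Finset.sum_mul, ← SS]
    ring
  rw [add_assoc, h3, h4]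
  ring

lemma hB : ∀ m : ℕ, (X - 1) * SS m = PP m - 1 := by
  intro m
  induction m with
  | zero => simp [SS, PP]
  | succ m ih =>
      have hD : SS m + (X - 1) * derivative (SS m) = derivative (PP m) := by
        have := congrArg derivative ih
        simpa [derivative_mul] using this
      rw [SS_succ]
      show _ = PP (m + 1) - 1
      rw [show PP (m + 1) = 2 * (X ^ 2 - X) * derivative (PP m) + (2 * X - 1) * PP m from rfl]
      linear_combination (1 : ℝ[X]) * ih + (2 * X ^ 2 - 2 * X : ℝ[X]) * hD

noncomputable def LL : ℕ → ℝ[X]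
  | 0 => 0
  | m + 1 => LL m - Polynomial.C (1 / 2 : ℝ) * ((1 - X) * SS m + (1 - 2 * X) * PP m)

lemma LL_deriv : ∀ m : ℕ, derivative (LL m) = Polynomial.C (1 / 2 : ℝ) * SS m := by
  intro m
  induction m with
  | zero => simp [LL, SS]
  | succ m ih =>
      have hD : SS m + (X - 1) * derivative (SS m) = derivative (PP m) := by
        have := congrArg derivative (hB m)
        simpa [derivative_mul] using this
      show derivative (LL m - Polynomial.C (1 / 2 : ℝ) * ((1 - X) * SS m + (1 - 2 * X) * PP m)) = _
      rw [derivative_sub, derivative_C_mul, ih, SS_succ]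
      simp only [derivative_add, derivative_mul, derivative_one, derivative_sub, derivative_X,
        derivative_ofNat]
      linear_combination (Polynomial.C (1 / 2 : ℝ) * (1 - 2 * X) : ℝ[X]) * hD

lemma PP_eval0 (m : ℕ) : (PP m).eval 0 = (-1) ^ m := by
  induction m with
  | zero => simp [PP]
  | succ m ih =>
      show ((2 * (X ^ 2 - X) * derivative (PP m) + (2 * X - 1) * PP m)).eval 0 = _
      simp [ih, pow_succ]

lemma PP_eval1 (m : ℕ) : (PP m).eval 1 = 1 := by
  have h := congrArg (Polynomial.eval (1 : ℝ)) (hB m)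
  simp at h
  linarith

lemma SS_eval0 (m : ℕ) : (SS m).eval 0 = 1 - (-1) ^ m := by
  have := congrArg (Polynomial.eval (0 : ℝ)) (hB m)
  simp [PP_eval0] at this
  linarith

lemma LL_bd : ∀ m : ℕ, (LL m).eval 1 - (LL m).eval 0 = m := by
  intro m
  induction m with
  | zero => simp [LL]
  | succ m ih =>
      show ((LL m - Polynomial.C (1 / 2 : ℝ) * ((1 - X) * SS m + (1 - 2 * X) * PP m))).eval 1
        - ((LL m - Polynomial.C (1 / 2 : ℝ) * ((1 - X) * SS m + (1 - 2 * X) * PP m))).eval 0 = _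
      simp only [eval_sub, eval_mul, eval_add, eval_C, eval_one, eval_X, eval_ofNat, eval_sub]
      rw [PP_eval0, PP_eval1, SS_eval0]
      have hsq : ((-1 : ℝ)) ^ m * (-1) ^ m = 1 := by
        rw [← pow_add, Even.neg_one_pow ⟨m, rfl⟩]
      push_cast
      linear_combination ih

noncomputable def II (n : ℕ) : ℝ := ∫ t in (0:ℝ)..1, (PP n).eval t

lemma starI (n : ℕ) :
    ∑ k ∈ Finset.range (n + 1), ((n + 1).choose k : ℝ) * 2 ^ (n - k) * II k = n + 1 := by
  have h1 : ∀ k, II k = ∫ t in (0:ℝ)..1, (PP k).eval t := fun _ => rfl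
  have key : ∑ k ∈ Finset.range (n + 1), ((n + 1).choose k : ℝ) * 2 ^ (n - k) * II k
      = ∫ t in (0:ℝ)..1, (Polynomial.C (1/2 : ℝ) * SS (n + 1)).eval t := by
    have : ∀ t : ℝ, (Polynomial.C (1/2 : ℝ) * SS (n + 1)).eval t
        = ∑ k ∈ Finset.range (n + 1), ((n + 1).choose k : ℝ) * 2 ^ (n - k) * (PP k).eval t := by
      intro t
      rw [SS]
      simp only [eval_mul, eval_C, eval_finset_sum, Finset.mul_sum]
      refine Finset.sum_congr rfl fun k hk => ?_
      rw [Finset.mem_range] at hk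
      have : n + 1 - k = (n - k) + 1 := by omega
      rw [this, pow_succ]
      ring
    rw [intervalIntegral.integral_congr (fun t _ => (this t))]
    rw [intervalIntegral.integral_finset_sum (f := fun k t => ((n + 1).choose k : ℝ) * 2 ^ (n - k) * (PP k).eval t) (fun k _ =>
      ((continuous_const.mul (Polynomial.continuous (PP k))).intervalIntegrable 0 1))]
    exact (Finset.sum_congr rfl fun k _ => by
      rw [intervalIntegral.integral_const_mul, h1]).symm
  rw [key]
  have hderiv : ∀ x ∈ Set.uIcc (0:ℝ) 1, HasDerivAt (fun y => (LL (n+1)).eval y)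
      ((Polynomial.C (1/2 : ℝ) * SS (n + 1)).eval x) x := by
    intro x _
    have := Polynomial.hasDerivAt (LL (n+1)) x
    rwa [LL_deriv] at this
  rw [intervalIntegral.integral_eq_sub_of_hasDerivAt hderiv
    ((Polynomial.continuous _).intervalIntegrable 0 1)]
  have := LL_bd (n + 1)
  push_cast at this ⊢
  linarith

lemma starR (n : ℕ) :
    ∑ k ∈ Finset.range (n + 1), ((n + 1).choose k : ℝ) * 2 ^ (n - k) * (2 ^ k * bernPoly k (1/2))
      = n + 1 := by
  have h := Polynomial.sum_bernoulli n
  have h2 := congrArg (fun p : Polynomial ℚ => ((p.map (algebraMap ℚ ℝ)).eval (1/2 : ℝ))) h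
  simp only [Polynomial.map_sum, Polynomial.eval_finset_sum] at h2
  have h3 : ∀ k ∈ Finset.range (n + 1),
      ((((n + 1).choose k : ℚ) • Polynomial.bernoulli k).map (algebraMap ℚ ℝ)).eval (1/2 : ℝ)
      = ((n + 1).choose k : ℝ) * bernPoly k (1/2) := by
    intro k _
    rw [Polynomial.smul_eq_C_mul, Polynomial.map_mul, Polynomial.map_C]
    simp [bernPoly]
  rw [Finset.sum_congr rfl h3] at h2
  have h4 : (((Polynomial.monomial n ((n : ℚ) + 1)).map (algebraMap ℚ ℝ)).eval (1/2 : ℝ))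
      = ((n : ℝ) + 1) * (1/2) ^ n := by
    rw [Polynomial.map_monomial]
    simp [Polynomial.eval_monomial]
    ring
  rw [h4] at h2
  have h5 : ∑ k ∈ Finset.range (n + 1), ((n + 1).choose k : ℝ) * 2 ^ (n - k) * (2 ^ k * bernPoly k (1/2))
      = 2 ^ n * ∑ k ∈ Finset.range (n + 1), ((n + 1).choose k : ℝ) * bernPoly k (1/2) := by
    rw [Finset.mul_sum]
    refine Finset.sum_congr rfl fun k hk => ?_
    rw [Finset.mem_range] at hk
    have : 2 ^ (n - k) * (2:ℝ) ^ k = 2 ^ n := by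
      rw [← pow_add]
      congr 1
      omega
    calc ((n + 1).choose k : ℝ) * 2 ^ (n - k) * (2 ^ k * bernPoly k (1/2))
        = (2 ^ (n - k) * 2 ^ k) * (((n + 1).choose k : ℝ) * bernPoly k (1/2)) := by ring
      _ = 2 ^ n * (((n + 1).choose k : ℝ) * bernPoly k (1/2)) := by rw [this]
  rw [h5, h2]
  rw [show ((1:ℝ)/2) ^ n = (2 ^ n)⁻¹ by rw [one_div, inv_pow]]
  field_simp

lemma II_eq_R : ∀ n : ℕ, II n = 2 ^ n * bernPoly n (1/2) := by
  intro n
  induction n using Nat.strong_induction_on with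
  | _ n ih =>
      have hI := starI n
      have hR := starR n
      rw [Finset.sum_range_succ] at hI hR
      have hsum : ∑ k ∈ Finset.range n, ((n + 1).choose k : ℝ) * 2 ^ (n - k) * II k
          = ∑ k ∈ Finset.range n, ((n + 1).choose k : ℝ) * 2 ^ (n - k) * (2 ^ k * bernPoly k (1/2)) := by
        refine Finset.sum_congr rfl fun k hk => ?_
        rw [Finset.mem_range] at hk
        rw [ih k hk]
      rw [hsum] at hI
      have hc : ((n + 1).choose n : ℝ) = n + 1 := by
        rw [Nat.choose_succ_self_right]
        push_cast
        rfl
      rw [hc, Nat.sub_self, pow_zero] at hI hR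
      have hn1 : (n : ℝ) + 1 ≠ 0 := by positivity
      have := sub_eq_zero.mpr (hI.trans hR.symm)
      field_simp at this ⊢
      nlinarith [this]
lemma mac_zero : ∀ m : ℕ, macmahon m 0 = 0
  | 0 => rfl
  | 1 => rfl
  | (m + 2) => rfl

lemma mac_gt : ∀ n k : ℕ, n < k → macmahon n k = 0 := by
  intro n
  induction n with
  | zero => intro k _; rfl
  | succ n ih =>
      intro k hk
      match n, k, hk with
      | 0, k + 2, _ => rfl
      | n + 1, k + 1, hk =>
          show (2 * k + 1) * macmahon (n + 1) (k + 1) + (2 * (n + 2) - 2 * (k + 1) + 1) * macmahon (n + 1) k = 0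
          rw [ih (k + 1) (by omega), ih k (by omega)]
          ring

lemma mac_succ (n k : ℕ) : macmahon (n + 2) (k + 1)
    = (2 * k + 1) * macmahon (n + 1) (k + 1) + (2 * (n + 2) - 2 * (k + 1) + 1) * macmahon (n + 1) k := rfl

lemma dX (a : ℕ) : derivative (X ^ a : ℝ[X]) * X = (a : ℝ[X]) * X ^ a := by
  cases a with
  | zero => simp
  | succ a =>
      rw [derivative_X_pow]
      push_cast
      simp only [map_add, map_one, Polynomial.C_eq_natCast]
      ring

lemma dXm (b : ℕ) : derivative ((X - 1) ^ b : ℝ[X]) * (X - 1) = (b : ℝ[X]) * (X - 1) ^ b := by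
  cases b with
  | zero => simp
  | succ b =>
      rw [derivative_pow]
      simp only [derivative_sub, derivative_X, derivative_one, sub_zero, mul_one]
      push_cast
      simp only [map_add, map_one, Polynomial.C_eq_natCast]
      ring

lemma perterm (a b : ℕ) :
    2 * (X ^ 2 - X) * derivative ((X : ℝ[X]) ^ a * (X - 1) ^ b)
      + (2 * X - 1) * ((X : ℝ[X]) ^ a * (X - 1) ^ b)
    = ((2 * a + 1 : ℕ) : ℝ[X]) * (X ^ a * (X - 1) ^ (b + 1))
      + ((2 * b + 1 : ℕ) : ℝ[X]) * (X ^ (a + 1) * (X - 1) ^ b) := by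
  rw [derivative_mul]
  push_cast
  linear_combination (2 * (X - 1) * (X - 1) ^ b : ℝ[X]) * dX a + (2 * X * X ^ a : ℝ[X]) * dXm b

lemma PP_explicit (n : ℕ) :
    PP n = ∑ i ∈ Finset.range (n + 1),
      Polynomial.C ((macmahon (n + 1) (i + 1) : ℝ)) * (X ^ (n - i) * (X - 1) ^ i) := by
  induction n with
  | zero =>
      show (1 : ℝ[X]) = _
      simp [show macmahon 1 1 = 1 from rfl]
  | succ n ih =>
      show 2 * (X ^ 2 - X) * derivative (PP n) + (2 * X - 1) * PP n = _
      rw [ih]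
      rw [derivative_sum]
      simp only [derivative_C_mul]
      rw [Finset.mul_sum, Finset.mul_sum, ← Finset.sum_add_distrib]
      have lhs_eq : ∀ i ∈ Finset.range (n + 1),
          2 * (X ^ 2 - X) * (Polynomial.C ((macmahon (n + 1) (i + 1) : ℝ)) * derivative ((X : ℝ[X]) ^ (n - i) * (X - 1) ^ i))
            + (2 * X - 1) * (Polynomial.C ((macmahon (n + 1) (i + 1) : ℝ)) * (X ^ (n - i) * (X - 1) ^ i))
          = Polynomial.C ((macmahon (n + 1) (i + 1) : ℝ)) *
              (((2 * (n - i) + 1 : ℕ) : ℝ[X]) * (X ^ (n - i) * (X - 1) ^ (i + 1))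
                + ((2 * i + 1 : ℕ) : ℝ[X]) * (X ^ ((n - i) + 1) * (X - 1) ^ i)) := by
        intro i _
        rw [← perterm (n - i) i]
        ring
      rw [Finset.sum_congr rfl lhs_eq]
      -- RHS: split macmahon recurrence
      have rhs_eq : ∀ i ∈ Finset.range (n + 2),
          Polynomial.C ((macmahon (n + 2) (i + 1) : ℝ)) * (X ^ (n + 1 - i) * (X - 1) ^ i)
          = Polynomial.C (((2 * i + 1) * macmahon (n + 1) (i + 1) : ℕ) : ℝ) * (X ^ (n + 1 - i) * (X - 1) ^ i)
            + Polynomial.C (((2 * (n + 1 - i) + 1) * macmahon (n + 1) i : ℕ) : ℝ) * (X ^ (n + 1 - i) * (X - 1) ^ i) := by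
        intro i hi
        rw [Finset.mem_range] at hi
        rw [mac_succ]
        have : 2 * (n + 2) - 2 * (i + 1) + 1 = 2 * (n + 1 - i) + 1 := by omega
        rw [this]
        simp only [Nat.cast_add, Nat.cast_mul, map_add, map_mul, map_one, Polynomial.C_eq_natCast]
        push_cast
        ring
      rw [Finset.sum_congr rfl rhs_eq, Finset.sum_add_distrib]
      -- first RHS sum: drop i = n+1 term (zero), reduce to range (n+1)
      have first : ∑ i ∈ Finset.range (n + 2),
          Polynomial.C (((2 * i + 1) * macmahon (n + 1) (i + 1) : ℕ) : ℝ) * (X ^ (n + 1 - i) * (X - 1) ^ i)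
          = ∑ i ∈ Finset.range (n + 1),
          Polynomial.C ((macmahon (n + 1) (i + 1) : ℝ)) * (((2 * i + 1 : ℕ) : ℝ[X]) * (X ^ ((n - i) + 1) * (X - 1) ^ i)) := by
        rw [Finset.sum_range_succ, mac_gt (n + 1) (n + 2) (by omega)]
        simp only [Nat.mul_zero, mul_zero, Nat.cast_zero, map_zero, zero_mul, add_zero]
        refine Finset.sum_congr rfl fun i hi => ?_
        rw [Finset.mem_range] at hi
        have : n + 1 - i = (n - i) + 1 := by omega
        rw [this]
        simp only [Nat.cast_add, Nat.cast_mul, map_add, map_mul, map_one, Polynomial.C_eq_natCast]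
        push_cast
        ring
      -- second RHS sum: peel i = 0 (zero), shift
      have second : ∑ i ∈ Finset.range (n + 2),
          Polynomial.C (((2 * (n + 1 - i) + 1) * macmahon (n + 1) i : ℕ) : ℝ) * (X ^ (n + 1 - i) * (X - 1) ^ i)
          = ∑ i ∈ Finset.range (n + 1),
          Polynomial.C ((macmahon (n + 1) (i + 1) : ℝ)) * (((2 * (n - i) + 1 : ℕ) : ℝ[X]) * (X ^ (n - i) * (X - 1) ^ (i + 1))) := by
        rw [Finset.sum_range_succ' (fun i =>
          Polynomial.C (((2 * (n + 1 - i) + 1) * macmahon (n + 1) i : ℕ) : ℝ) * (X ^ (n + 1 - i) * (X - 1) ^ i)) (n + 1)]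
        rw [mac_zero]
        simp only [Nat.mul_zero, mul_zero, Nat.cast_zero, map_zero, zero_mul, add_zero]
        refine Finset.sum_congr rfl fun i hi => ?_
        rw [Finset.mem_range] at hi
        have e1 : n + 1 - (i + 1) = n - i := by omega
        rw [e1]
        simp only [Nat.cast_add, Nat.cast_mul, map_add, map_mul, map_one, Polynomial.C_eq_natCast]
        push_cast
        ring
      rw [first, second, ← Finset.sum_add_distrib]
      refine Finset.sum_congr rfl fun i hi => ?_
      ring


lemma Q_eq (n : ℕ) (a b : ℝ) (hab : a < b) (u : ℝ) :
    Q n a b u = (b - a) ^ n * (PP n).eval ((u - a) / (b - a)) := by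
  have hba : b - a ≠ 0 := by linarith
  rw [Q, ← Finset.Ico_add_one_right_eq_Icc, Finset.sum_Ico_eq_sum_range]
  rw [PP_explicit]
  simp only [eval_finset_sum, eval_mul, eval_C, eval_pow, eval_sub, eval_X, eval_one]
  rw [Finset.mul_sum]
  refine Finset.sum_congr rfl fun i hi => ?_
  rw [Finset.mem_range] at hi
  have e1 : n + 1 - (1 + i) = n - i := by omega
  have e2 : 1 + i - 1 = i := by omega
  rw [e1, e2]
  have e3 : (b - a) ^ n = (b - a) ^ (n - i) * (b - a) ^ i := by
    rw [← pow_add]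
    congr 1
    omega
  have e4 : ((u - a) / (b - a)) ^ (n - i) * (b - a) ^ (n - i) = (u - a) ^ (n - i) := by
    rw [← mul_pow, div_mul_cancel₀ _ hba]
  have e5 : ((u - a) / (b - a) - 1) ^ i * (b - a) ^ i = (u - b) ^ i := by
    rw [← mul_pow, sub_mul, div_mul_cancel₀ _ hba, one_mul]
    congr 1
    ring
  rw [show 1 + i = i + 1 by omega, ← e4, ← e5, e3]
  ring

end Aux

theorem integral_Q (n : ℕ) (a b : ℝ) (hab : a < b) :
    ∫ u in a..b, Q n a b u = 2 ^ n * bernPoly n (1 / 2) * (b - a) ^ (n + 1) := by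
  have hba : b - a ≠ 0 := by
    have : (0:ℝ) < b - a := by linarith
    exact ne_of_gt this
  have h1 : (∫ u in a..b, Q n a b u)
      = (b - a) ^ n * ∫ u in a..b, (PP n).eval ((u - a) / (b - a)) := by
    rw [← intervalIntegral.integral_const_mul]
    exact intervalIntegral.integral_congr fun u _ => Q_eq n a b hab u
  have h2 : (∫ u in a..b, (PP n).eval ((u - a) / (b - a))) = (b - a) * II n := by
    have := intervalIntegral.integral_comp_sub_right
      (fun x => (PP n).eval (x / (b - a))) a (a := a) (b := b)
    rw [this, sub_self]
    have h3 := intervalIntegral.integral_comp_div (a := 0) (b := b - a)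
      (fun t => (PP n).eval t) hba
    rw [h3, zero_div, div_self hba]
    simp [II]
  rw [h1, h2, II_eq_R]
  ring
end

section
/- For every n ≥ 0 and t > 0, ∫_0^1 e^{t/2} / (u + (1−u)e^t) du = t e^{t/2} / (e^t − 1), and consequently the function G(u,t) = e^{t/2}/(u + (1−u)e^t) is the exponential generating function in t of the polynomials (1/2^n) Q_n(u; 0, 1). -/
open scoped BigOperators
open MeasureTheory

lemma macmahon_zero_right : ∀ n, macmahon n 0 = 0
  | 0 => rfl
  | 1 => rfl
  | _ + 2 => rfl

lemma macmahon_eq_zero : ∀ n k, n < k → macmahon n k = 0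
  | 0, _, _ => rfl
  | 1, k + 2, _ => rfl
  | n + 2, k + 1, h => by
      have h1 : macmahon (n + 1) (k + 1) = 0 := macmahon_eq_zero _ _ (by omega)
      have h2 : macmahon (n + 1) k = 0 := macmahon_eq_zero _ _ (by omega)
      show (2 * k + 1) * macmahon (n + 1) (k + 1) +
        (2 * (n + 2) - 2 * (k + 1) + 1) * macmahon (n + 1) k = 0
      rw [h1, h2]; ring

lemma macmahon_rec (n j : ℕ) (hj : j ≤ n + 1) :
    macmahon (n + 2) (j + 1) = (2 * j + 1) * macmahon (n + 1) (j + 1) +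
      (2 * (n + 1 - j) + 1) * macmahon (n + 1) j := by
  show (2 * j + 1) * macmahon (n + 1) (j + 1) +
      (2 * (n + 2) - 2 * (j + 1) + 1) * macmahon (n + 1) j = _
  congr 3
  omega

noncomputable def Pc (n : ℕ) (x : ℂ) : ℂ :=
  ∑ j ∈ Finset.range (n + 1), (macmahon (n + 1) (j + 1) : ℂ) * x ^ (n - j) * (x - 1) ^ j

noncomputable def Pc' (n : ℕ) (x : ℂ) : ℂ :=
  ∑ j ∈ Finset.range (n + 1), (macmahon (n + 1) (j + 1) : ℂ) *
    (((n - j : ℕ) : ℂ) * x ^ (n - j - 1) * (x - 1) ^ j +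
      x ^ (n - j) * (((j : ℕ) : ℂ) * (x - 1) ^ (j - 1)))

lemma Pc_zero (x : ℂ) : Pc 0 x = 1 := by
  simp [Pc, macmahon]

lemma Q_cast (n : ℕ) (u : ℝ) : ((Q n 0 1 u : ℝ) : ℂ) = Pc n (u : ℂ) := by
  unfold Q Pc
  push_cast
  rw [← Finset.Ico_add_one_right_eq_Icc, Finset.sum_Ico_eq_sum_range]
  refine Finset.sum_congr (by norm_num) fun j hj => ?_
  have h1 : n + 1 - (1 + j) = n - j := by omega
  have h2 : 1 + j - 1 = j := by omega
  have h3 : 1 + j = j + 1 := by omega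
  rw [h1, h2, h3, sub_zero]

lemma hasDerivAt_Pc (n : ℕ) (x : ℂ) : HasDerivAt (Pc n) (Pc' n x) x := by
  unfold Pc Pc'
  refine HasDerivAt.fun_sum fun j hj => ?_
  have h1 : HasDerivAt (fun x : ℂ => x ^ (n - j)) (((n - j : ℕ) : ℂ) * x ^ (n - j - 1)) x :=
    hasDerivAt_pow _ _
  have h2 : HasDerivAt (fun x : ℂ => (x - 1) ^ j) (((j : ℕ) : ℂ) * (x - 1) ^ (j - 1)) x := by
    simpa using (((hasDerivAt_id x).sub_const 1).fun_pow j)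
  have h3 := (h1.fun_mul h2).const_mul ((macmahon (n + 1) (j + 1) : ℂ))
  have heq : (fun y : ℂ => (macmahon (n + 1) (j + 1) : ℂ) * (y ^ (n - j) * (y - 1) ^ j))
      = fun y : ℂ => (macmahon (n + 1) (j + 1) : ℂ) * y ^ (n - j) * (y - 1) ^ j := by
    funext y; ring
  rw [heq] at h3
  convert h3 using 1

lemma cast_mul_pow_pred (m : ℕ) (x : ℂ) : (m : ℂ) * x ^ (m - 1) * x = (m : ℂ) * x ^ m := by
  cases m with
  | zero => simp
  | succ m => rw [Nat.add_sub_cancel, pow_succ]; ring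

lemma key (n : ℕ) (x : ℂ) :
    Pc (n + 1) x = (2 * x - 1) * Pc n x + (2 * x * (x - 1)) * Pc' n x := by
  unfold Pc Pc'
  rw [Finset.mul_sum, Finset.mul_sum, ← Finset.sum_add_distrib]
  simp only [show n + 1 + 1 = n + 2 from rfl]
  have hL : ∀ j ∈ Finset.range (n + 2),
      (macmahon (n + 2) (j + 1) : ℂ) * x ^ (n + 1 - j) * (x - 1) ^ j
      = (((2 * j + 1) * macmahon (n + 1) (j + 1) : ℕ) : ℂ) * (x ^ (n + 1 - j) * (x - 1) ^ j)
        + (((2 * (n + 1 - j) + 1) * macmahon (n + 1) j : ℕ) : ℂ) *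
            (x ^ (n + 1 - j) * (x - 1) ^ j) := by
    intro j hj
    have hj' : j ≤ n + 1 := by have := Finset.mem_range.mp hj; omega
    rw [macmahon_rec n j hj']
    push_cast
    ring
  rw [Finset.sum_congr rfl hL, Finset.sum_add_distrib]
  have hA : ∑ j ∈ Finset.range (n + 2),
      (((2 * j + 1) * macmahon (n + 1) (j + 1) : ℕ) : ℂ) * (x ^ (n + 1 - j) * (x - 1) ^ j)
      = ∑ j ∈ Finset.range (n + 1),
      (((2 * j + 1) * macmahon (n + 1) (j + 1) : ℕ) : ℂ) * (x ^ (n + 1 - j) * (x - 1) ^ j) := by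
    rw [Finset.sum_range_succ, macmahon_eq_zero (n + 1) (n + 2) (by omega)]
    simp
  have hB : ∑ j ∈ Finset.range (n + 2),
      (((2 * (n + 1 - j) + 1) * macmahon (n + 1) j : ℕ) : ℂ) * (x ^ (n + 1 - j) * (x - 1) ^ j)
      = ∑ j ∈ Finset.range (n + 1),
      (((2 * (n - j) + 1) * macmahon (n + 1) (j + 1) : ℕ) : ℂ) *
        (x ^ (n - j) * (x - 1) ^ (j + 1)) := by
    rw [Finset.sum_range_succ']
    rw [macmahon_zero_right]
    simp only [Nat.mul_zero, Nat.cast_zero, zero_mul, add_zero]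
    refine Finset.sum_congr rfl fun j hj => ?_
    have h1 : n + 1 - (j + 1) = n - j := by omega
    rw [h1]
  rw [hA, hB, ← Finset.sum_add_distrib]
  refine Finset.sum_congr rfl fun j hj => ?_
  have hj' : j ≤ n := by have := Finset.mem_range.mp hj; omega
  have h1 : n + 1 - j = (n - j) + 1 := by omega
  set m := n - j with hm
  set c := ((macmahon (n + 1) (j + 1) : ℕ) : ℂ) with hc
  rw [h1]
  push_cast
  have hA' := cast_mul_pow_pred m x
  have hB' := cast_mul_pow_pred j (x - 1)
  rw [pow_succ, pow_succ]
  linear_combination (-2 * c * (x - 1) * (x - 1) ^ j) * hA' + (-2 * c * x * x ^ m) * hB'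

noncomputable def Dc (u : ℝ) (z : ℂ) : ℂ := (u : ℂ) + (1 - u) * Complex.exp z
noncomputable def gc (u : ℝ) (z : ℂ) : ℂ := (u : ℂ) / Dc u z
noncomputable def Fc (u : ℝ) (z : ℂ) : ℂ := Complex.exp (z / 2) / Dc u z

lemma hasDerivAt_Dc (u : ℝ) (z : ℂ) : HasDerivAt (Dc u) ((1 - (u : ℂ)) * Complex.exp z) z := by
  unfold Dc
  simpa using ((Complex.hasDerivAt_exp z).const_mul ((1 : ℂ) - u)).const_add (u : ℂ)

lemma hasDerivAt_gc (u : ℝ) (z : ℂ) (hz : Dc u z ≠ 0) :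
    HasDerivAt (gc u) (gc u z ^ 2 - gc u z) z := by
  have h := (hasDerivAt_const z (u : ℂ)).div (hasDerivAt_Dc u z) hz
  refine h.congr_deriv ?_
  unfold gc Dc
  unfold Dc at hz
  field_simp
  ring

lemma hasDerivAt_Fc (u : ℝ) (z : ℂ) (hz : Dc u z ≠ 0) :
    HasDerivAt (Fc u) (Fc u z * (gc u z - 1 / 2)) z := by
  have hnum : HasDerivAt (fun z : ℂ => Complex.exp (z / 2)) (Complex.exp (z / 2) * (1 / 2)) z :=
    ((hasDerivAt_id z).div_const 2).cexp
  have h := hnum.div (hasDerivAt_Dc u z) hz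
  refine h.congr_deriv ?_
  unfold Fc gc Dc
  unfold Dc at hz
  field_simp
  ring

lemma iter_deriv (u : ℝ) (s : Set ℂ) (hs : IsOpen s) (hD : ∀ z ∈ s, Dc u z ≠ 0) :
    ∀ n, ∀ z ∈ s, iteratedDeriv n (Fc u) z = Fc u z * Pc n (gc u z) / 2 ^ n := by
  intro n
  induction n with
  | zero => intro z hz; simp [Pc_zero]
  | succ n ih =>
      intro z hz
      rw [iteratedDeriv_succ]
      have hev : iteratedDeriv n (Fc u) =ᶠ[nhds z]
          fun w => Fc u w * Pc n (gc u w) / 2 ^ n := by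
        filter_upwards [hs.mem_nhds hz] with w hw using ih w hw
      rw [hev.deriv_eq]
      have hcomp : HasDerivAt (fun w => Pc n (gc u w))
          (Pc' n (gc u z) * (gc u z ^ 2 - gc u z)) z :=
        (hasDerivAt_Pc n (gc u z)).comp z (hasDerivAt_gc u z (hD z hz))
      have hd : HasDerivAt (fun w => Fc u w * Pc n (gc u w) / 2 ^ n)
          ((Fc u z * (gc u z - 1 / 2) * Pc n (gc u z) +
            Fc u z * (Pc' n (gc u z) * (gc u z ^ 2 - gc u z))) / 2 ^ n) z :=
        ((hasDerivAt_Fc u z (hD z hz)).mul hcomp).div_const _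
      rw [hd.deriv]
      have hk := key n (gc u z)
      rw [pow_succ]
      linear_combination (-(Fc u z) / (2 ^ n * 2)) * hk

lemma Dc_zero (u : ℝ) : Dc u 0 = 1 := by
  simp [Dc, Complex.exp_zero]

lemma iteratedDeriv_Fc_zero (u : ℝ) (hu : u ∈ Set.Ioo (0:ℝ) 1) {ε : ℝ} (hε : 0 < ε)
    (hD : ∀ z ∈ Metric.ball (0:ℂ) ε, Dc u z ≠ 0) (n : ℕ) :
    iteratedDeriv n (Fc u) 0 = Pc n (u : ℂ) / 2 ^ n := by
  have h0 : (0:ℂ) ∈ Metric.ball (0:ℂ) ε := Metric.mem_ball_self hε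
  rw [iter_deriv u _ Metric.isOpen_ball hD n 0 h0]
  have h1 : Fc u 0 = 1 := by rw [Fc, Dc_zero]; simp
  have h2 : gc u 0 = (u : ℂ) := by rw [gc, Dc_zero]; simp
  rw [h1, h2, one_mul]

lemma part2 (u : ℝ) (hu : u ∈ Set.Ioo (0:ℝ) 1) : ∃ ε > (0:ℝ), ∀ t : ℝ, |t| < ε →
    HasSum (fun n : ℕ => (1 / 2 ^ n : ℝ) * Q n 0 1 u * t ^ n / n.factorial)
      (Real.exp (t / 2) / (u + (1 - u) * Real.exp t)) := by
  obtain ⟨hu0, hu1⟩ := hu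
  have h1u : (0:ℝ) < 1 - u := by linarith
  refine ⟨min 1 (1 / (2 * (1 - u))), lt_min one_pos (by positivity), fun t ht => ?_⟩
  set ε := min 1 (1 / (2 * (1 - u))) with hε
  have hD : ∀ z ∈ Metric.ball (0:ℂ) ε, Dc u z ≠ 0 := by
    intro z hz h
    have hz1 : ‖z‖ < ε := by
      simpa [Metric.mem_ball, Complex.dist_eq] using hz
    have habs : ‖Complex.exp z - 1‖ ≤ 2 * ‖z‖ :=
      Complex.norm_exp_sub_one_le (le_trans hz1.le (min_le_left _ _))
    have hw : ((1:ℂ) - u) * (Complex.exp z - 1) = -1 := by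
      unfold Dc at h; linear_combination h
    have h2 := congrArg (‖·‖) hw
    rw [norm_mul] at h2
    have h3 : ‖((1:ℂ) - u)‖ = 1 - u := by
      rw [show ((1:ℂ) - u) = ((1 - u : ℝ) : ℂ) by push_cast; ring, Complex.norm_real,
        Real.norm_eq_abs, abs_of_pos h1u]
    rw [h3] at h2
    simp only [norm_neg, norm_one] at h2
    have hz2 : ‖z‖ < 1 / (2 * (1 - u)) := lt_of_lt_of_le hz1 (min_le_right _ _)
    have : (1 - u) * ‖Complex.exp z - 1‖ < 1 := by
      calc (1 - u) * ‖Complex.exp z - 1‖ ≤ (1 - u) * (2 * ‖z‖) := by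
            exact mul_le_mul_of_nonneg_left habs h1u.le
        _ < (1 - u) * (2 * (1 / (2 * (1 - u)))) := by
            apply mul_lt_mul_of_pos_left _ h1u
            linarith
        _ = 1 := by field_simp
    rw [h2] at this
    exact absurd this (lt_irrefl 1)
  have hdiff : DifferentiableOn ℂ (Fc u) (Metric.ball (0:ℂ) ε) := by
    apply DifferentiableOn.div
    · exact (Complex.differentiable_exp.comp (differentiable_id.div_const 2)).differentiableOn
    · exact ((differentiable_const _).add
        ((differentiable_const _).mul Complex.differentiable_exp)).differentiableOn
    · exact hD
  have htb : (t:ℂ) ∈ Metric.ball (0:ℂ) ε := by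
    simpa [Metric.mem_ball, Complex.dist_eq, Complex.norm_real] using ht
  have H := Complex.hasSum_taylorSeries_on_ball hdiff htb
  have Heq : (fun n : ℕ => ((n.factorial : ℕ) : ℂ)⁻¹ • ((t:ℂ) - 0) ^ n • iteratedDeriv n (Fc u) 0)
      = fun n : ℕ => (((1 / 2 ^ n : ℝ) * Q n 0 1 u * t ^ n / n.factorial : ℝ) : ℂ) := by
    funext n
    rw [iteratedDeriv_Fc_zero u ⟨hu0, hu1⟩ (lt_min one_pos (by positivity)) hD n]
    rw [smul_eq_mul, smul_eq_mul, sub_zero]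
    push_cast [Q_cast]
    ring
  rw [Heq] at H
  have HF : Fc u (t:ℂ) = ((Real.exp (t / 2) / (u + (1 - u) * Real.exp t) : ℝ) : ℂ) := by
    unfold Fc Dc
    push_cast [Complex.ofReal_exp]
    rfl
  rw [HF] at H
  exact Complex.hasSum_ofReal.mp H

lemma part1 (t : ℝ) (ht : 0 < t) :
    ∫ u in (0:ℝ)..1, Real.exp (t / 2) / (u + (1 - u) * Real.exp t) =
      t * Real.exp (t / 2) / (Real.exp t - 1) := by
  have het : 1 < Real.exp t := by nlinarith [Real.add_one_le_exp t]
  have hden : ∀ u : ℝ, u ∈ Set.uIcc (0:ℝ) 1 → 0 < u + (1 - u) * Real.exp t := by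
    intro u hu
    rw [Set.uIcc_of_le (by norm_num)] at hu
    nlinarith [hu.1, hu.2]
  set c := Real.exp (t / 2) / (Real.exp t - 1) with hc
  have hderiv : ∀ u ∈ Set.uIcc (0:ℝ) 1,
      HasDerivAt (fun v => -c * Real.log (v + (1 - v) * Real.exp t))
        (Real.exp (t / 2) / (u + (1 - u) * Real.exp t)) u := by
    intro u hu
    have h1 : HasDerivAt (fun v : ℝ => v + (1 - v) * Real.exp t) (1 + (0 - 1) * Real.exp t) u := by
      exact (hasDerivAt_id u).add
        (((hasDerivAt_const u (1:ℝ)).sub (hasDerivAt_id u)).mul_const (Real.exp t))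
    have h2 := (h1.log (hden u hu).ne').const_mul (-c)
    refine h2.congr_deriv ?_
    rw [hc]
    have hne := (hden u hu).ne'
    have he1 : Real.exp t - 1 ≠ 0 := by linarith
    field_simp
    ring
  rw [intervalIntegral.integral_eq_sub_of_hasDerivAt hderiv ?_]
  · simp only [sub_zero, one_mul]
    rw [show (1:ℝ) + (1 - 1) * Real.exp t = 1 by ring, show (0:ℝ) + Real.exp t
      = Real.exp t by ring, Real.log_one, Real.log_exp, hc]
    field_simp
    ring
  · apply ContinuousOn.intervalIntegrable
    apply ContinuousOn.div continuousOn_const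
    · exact (continuousOn_id.add (((continuousOn_const.sub continuousOn_id)).mul
        continuousOn_const))
    · exact fun u hu => (hden u hu).ne'

theorem Q_generating_function :
    (∀ t : ℝ, 0 < t →
        ∫ u in (0:ℝ)..1, Real.exp (t / 2) / (u + (1 - u) * Real.exp t) =
          t * Real.exp (t / 2) / (Real.exp t - 1)) ∧
      ∀ u : ℝ, u ∈ Set.Ioo (0:ℝ) 1 → ∃ ε > (0:ℝ), ∀ t : ℝ, |t| < ε →
        HasSum (fun n : ℕ => (1 / 2 ^ n : ℝ) * Q n 0 1 u * t ^ n / n.factorial)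
          (Real.exp (t / 2) / (u + (1 - u) * Real.exp t)) :=
  ⟨part1, part2⟩
end
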